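/- Let 1 → C → Γ → G → 1 be a short exact sequence of finite groups with C commutative, and suppose the orders of C and G are coprime. Then there exists a section G → Γ, and any two sections are conjugate by an element of C. -/

import Mathlib

section aux

variable {C Γ G : Type} [CommGroup C] [Group Γ] [Group G]
    [Finite C] [Finite Γ] [Finite G]

/-- Existence of a section. -/
theorem stmt4_exists (f : C →* Γ) (g : Γ →* G)
    (hf : Function.Injective f) (hg : Function.Surjective g)
    (hexact : f.range = g.ker)
    (hcop : Nat.Coprime (Nat.card C) (Nat.card G)) :
    ∃ s : G →* Γ, g.comp s = MonoidHom.id G := by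
  have hcardker : Nat.card g.ker = Nat.card C := by
    rw [← hexact]
    exact (Nat.card_congr (MonoidHom.ofInjective hf).toEquiv).symm
  have hindex : g.ker.index = Nat.card G := by
    rw [Subgroup.index_ker, MonoidHom.range_eq_top.mpr hg]
    exact Nat.card_congr Subgroup.topEquiv.toEquiv
  have hcop' : Nat.Coprime (Nat.card g.ker) g.ker.index := by
    rw [hcardker, hindex]; exact hcop
  obtain ⟨H, hH⟩ := Subgroup.exists_right_complement'_of_coprime hcop'
  -- g restricted to H is bijective
  set φ : H →* G := g.comp H.subtype with hφ
  have hinj : Function.Injective φ := by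
    rw [← MonoidHom.ker_eq_bot_iff]
    rw [eq_bot_iff]
    intro h hh
    have h1 : (h : Γ) ∈ g.ker := hh
    have h2 : (h : Γ) ∈ g.ker ⊓ H := ⟨h1, h.2⟩
    rw [hH.disjoint.eq_bot] at h2
    have h3 : (h : Γ) = 1 := by simpa using h2
    exact Subgroup.mem_bot.mpr (Subtype.ext h3)
  have hsurj : Function.Surjective φ := by
    intro x
    obtain ⟨γ, hγ⟩ := hg x
    obtain ⟨⟨n, h⟩, hnh⟩ := hH.existsUnique γ |>.exists
    refine ⟨h, ?_⟩
    have hn1 : g (n : Γ) = 1 := n.2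
    have : g ((n : Γ) * (h : Γ)) = x := by rw [hnh]; exact hγ
    simpa [φ, hn1] using this
  let e : H ≃* G := MulEquiv.ofBijective φ ⟨hinj, hsurj⟩
  refine ⟨H.subtype.comp e.symm.toMonoidHom, ?_⟩
  ext x
  have : φ (e.symm x) = x := e.apply_symm_apply x
  simpa [φ] using this

/-- Conjugacy of sections. -/
theorem stmt4_conj (f : C →* Γ) (g : Γ →* G)
    (hf : Function.Injective f)
    (hexact : f.range = g.ker)
    (hcop : Nat.Coprime (Nat.card C) (Nat.card G))
    (s₁ s₂ : G →* Γ) (h₁ : g.comp s₁ = MonoidHom.id G) (h₂ : g.comp s₂ = MonoidHom.id G) :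
    ∃ c : C, ∀ x : G, s₂ x = f c * s₁ x * (f c)⁻¹ := by
  have hs₁ : ∀ x, g (s₁ x) = x := fun x => DFunLike.congr_fun h₁ x
  have hs₂ : ∀ x, g (s₂ x) = x := fun x => DFunLike.congr_fun h₂ x
  have hmem : ∀ γ : Γ, g γ = 1 → ∃ c, f c = γ := by
    intro γ h
    rwa [← MonoidHom.mem_ker, ← hexact] at h
  -- a right inverse of f on the kernel
  let finv : Γ → C := Function.invFun f
  have hfinv : ∀ γ : Γ, g γ = 1 → f (finv γ) = γ := fun γ h => Function.invFun_eq (hmem γ h)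
  -- the difference cocycle
  let d : G → C := fun x => finv (s₂ x * (s₁ x)⁻¹)
  have hd : ∀ x, f (d x) = s₂ x * (s₁ x)⁻¹ := by
    intro x
    exact hfinv _ (by simp [hs₁, hs₂])
  -- the action of G on C
  have hactmem : ∀ (x : G) (c : C), g (s₁ x * f c * (s₁ x)⁻¹) = 1 := by
    intro x c
    have : g (f c) = 1 := by
      have : f c ∈ g.ker := hexact ▸ ⟨c, rfl⟩
      exact this
    simp [this, hs₁]
  let act : G → C →* C := fun x =>
    { toFun := fun c => finv (s₁ x * f c * (s₁ x)⁻¹)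
      map_one' := by
        apply hf
        rw [hfinv _ (hactmem x 1)]
        simp
      map_mul' := by
        intro a b
        apply hf
        rw [map_mul f (finv (s₁ x * f a * (s₁ x)⁻¹)) (finv (s₁ x * f b * (s₁ x)⁻¹)), hfinv _ (hactmem x (a*b)), hfinv _ (hactmem x a), hfinv _ (hactmem x b)]
        rw [map_mul]
        group }
  have hact : ∀ x c, f (act x c) = s₁ x * f c * (s₁ x)⁻¹ := fun x c => hfinv _ (hactmem x c)
  -- cocycle identity
  have hcoc : ∀ x y, d (x * y) = d x * act x (d y) := by
    intro x y
    apply hf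
    rw [map_mul, hd, hd, hact, hd, map_mul, map_mul]
    group
  -- averaging
  have := Fintype.ofFinite G
  set σ : C := ∏ y : G, d y with hσdef
  have hσ : ∀ x : G, d x ^ Nat.card G = σ * (act x σ)⁻¹ := by
    intro x
    have h1 : ∏ y : G, d (x * y) = σ := Equiv.prod_comp (Equiv.mulLeft x) d
    have h2 : ∏ y : G, d (x * y) = d x ^ Nat.card G * act x σ := by
      simp_rw [hcoc x]
      rw [Finset.prod_mul_distrib, Finset.prod_const, ← map_prod (act x) d Finset.univ]
      congr 1
      · rw [Nat.card_eq_fintype_card, Finset.card_univ]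
    rw [h1] at h2
    rw [eq_mul_inv_iff_mul_eq]
    exact h2.symm
  -- Bezout
  set A : ℤ := Nat.gcdA (Nat.card C) (Nat.card G) with hA
  set B : ℤ := Nat.gcdB (Nat.card C) (Nat.card G) with hB
  have hbez : 1 = (Nat.card C : ℤ) * A + (Nat.card G : ℤ) * B := by
    have := Nat.gcd_eq_gcd_ab (Nat.card C) (Nat.card G)
    rwa [Nat.Coprime.gcd_eq_one hcop, Nat.cast_one] at this
  refine ⟨σ ^ B, ?_⟩
  have key : ∀ x : G, d x = σ ^ B * (act x (σ ^ B))⁻¹ := by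
    intro x
    have hpow : d x ^ ((Nat.card G : ℤ) * B) = σ ^ B * (act x (σ ^ B))⁻¹ := by
      rw [zpow_mul, zpow_natCast, hσ x, mul_zpow, map_zpow]
      rw [inv_zpow]
    have hone : d x ^ ((Nat.card C : ℤ) * A) = 1 := by
      rw [zpow_mul, zpow_natCast, pow_card_eq_one', one_zpow]
    calc d x = d x ^ (1 : ℤ) := (zpow_one _).symm
      _ = d x ^ ((Nat.card C : ℤ) * A + (Nat.card G : ℤ) * B) := by rw [← hbez]
      _ = d x ^ ((Nat.card C : ℤ) * A) * d x ^ ((Nat.card G : ℤ) * B) := zpow_add _ _ _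
      _ = σ ^ B * (act x (σ ^ B))⁻¹ := by rw [hone, hpow, one_mul]
  intro x
  have h := congrArg f (key x)
  rw [hd, map_mul, map_inv, hact] at h
  have : s₂ x * (s₁ x)⁻¹ * s₁ x = f (σ ^ B) * (s₁ x * f (σ ^ B) * (s₁ x)⁻¹)⁻¹ * s₁ x := by
    rw [h]
  calc s₂ x = s₂ x * (s₁ x)⁻¹ * s₁ x := by group
    _ = f (σ ^ B) * (s₁ x * f (σ ^ B) * (s₁ x)⁻¹)⁻¹ * s₁ x := this
    _ = f (σ ^ B) * s₁ x * (f (σ ^ B))⁻¹ := by group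

end aux

/-- Schur–Zassenhaus, abelian kernel: given a short exact sequence
`1 → C → Γ → G → 1` of finite groups with `C` commutative and `|C|` coprime to
`|G|`, sections `G → Γ` exist and any two are conjugate by an element of `C`. -/
theorem stmt_4 (C Γ G : Type) [CommGroup C] [Group Γ] [Group G]
    [Finite C] [Finite Γ] [Finite G]
    (f : C →* Γ) (g : Γ →* G)
    (hf : Function.Injective f) (hg : Function.Surjective g)
    (hexact : f.range = g.ker)
    (hcop : Nat.Coprime (Nat.card C) (Nat.card G)) :
    (∃ s : G →* Γ, g.comp s = MonoidHom.id G) ∧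
      ∀ s₁ s₂ : G →* Γ, g.comp s₁ = MonoidHom.id G → g.comp s₂ = MonoidHom.id G →
        ∃ c : C, ∀ x : G, s₂ x = f c * s₁ x * (f c)⁻¹ := by
  exact ⟨stmt4_exists f g hf hg hexact hcop,
    fun s₁ s₂ h₁ h₂ => stmt4_conj f g hf hexact hcop s₁ s₂ h₁ h₂⟩
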